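/- Let X be a paracompact Hausdorff topological space and let π : E → X be a topological real vector bundle of rank n over X. Then there exist a separable real Hilbert space H and a continuous map φ : E → H such that for every x ∈ X the restriction of φ to the fiber E_x = π⁻¹(x) is an injective linear map from E_x into H. -/

import Mathlib

open TopologicalSpace Set Filter Bundle
open scoped ENNReal Topology

section lpAux

variable {G : ℕ → Type} [∀ i, NormedAddCommGroup (G i)] [∀ i, NormedSpace ℝ (G i)]

set_option linter.unusedSectionVars false in
lemma lp_single_sub' (i : ℕ) (a b : G i) :
    lp.single 2 i (a - b) = lp.single 2 i a - lp.single 2 i b := by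
  apply lp.ext
  funext j
  by_cases h : j = i
  · subst h; simp [lp.single_apply_self]
  · simp [lp.single_apply_ne 2 i _ h]

set_option linter.unusedSectionVars false in
lemma lp_isometry_single (i : ℕ) : Isometry (lp.single (E := G) 2 i) := by
  apply Isometry.of_dist_eq
  intro a b
  have hp : 0 < (2 : ℝ≥0∞).toReal := by norm_num
  have := lp.norm_single (E := G) (p := 2) (by norm_num) i (a - b)
  rw [dist_eq_norm, dist_eq_norm, ← lp_single_sub', this]

lemma lp_two_separable [∀ i, SeparableSpace (G i)] : SeparableSpace (lp G 2) := by
  have hA : IsSeparable (⋃ s : Finset ℕ,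
      range (fun g : ∀ i, G i => ∑ i ∈ s, lp.single 2 i (g i))) := by
    refine isSeparable_iUnion.2 fun s => isSeparable_range ?_
    exact continuous_finset_sum s fun i _ =>
      (lp_isometry_single i).continuous.comp (continuous_apply i)
  have hdense : ∀ f : lp G 2, f ∈ closure (⋃ s : Finset ℕ,
      range (fun g : ∀ i, G i => ∑ i ∈ s, lp.single 2 i (g i))) := by
    intro f
    have h2 : (2 : ℝ≥0∞) ≠ ⊤ := by simp
    have ht : Tendsto (fun s : Finset ℕ => ∑ i ∈ s, lp.single 2 i (f i)) atTop (𝓝 f) :=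
      lp.hasSum_single h2 f
    exact mem_closure_of_tendsto ht (Eventually.of_forall fun s => mem_iUnion.2 ⟨s, mem_range_self _⟩)
  exact isSeparable_univ_iff.1 ((hA.closure).mono fun f _ => hdense f)

end lpAux

/-- For a topological real vector bundle of rank `n` over a paracompact
Hausdorff base `B`, there exist a separable real Hilbert space `H` and a
continuous map `φ` from the total space of the bundle to `H` whose restriction
to each fiber is an injective linear map into `H`. -/
theorem exists_fiberwise_injective_map_to_hilbert
    {B : Type*} [TopologicalSpace B] [ParacompactSpace B] [T2Space B]
    (n : ℕ) (E : B → Type*)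
    [∀ x, AddCommGroup (E x)] [∀ x, Module ℝ (E x)] [∀ x, TopologicalSpace (E x)]
    [TopologicalSpace (Bundle.TotalSpace (Fin n → ℝ) E)]
    [FiberBundle (Fin n → ℝ) E] [VectorBundle ℝ (Fin n → ℝ) E] :
    ∃ (H : Type) (instN : NormedAddCommGroup H),
      letI := instN
      ∃ instI : InnerProductSpace ℝ H,
        letI := instI
        CompleteSpace H ∧ TopologicalSpace.SeparableSpace H ∧
        ∃ φ : Bundle.TotalSpace (Fin n → ℝ) E → H,
          Continuous φ ∧
          ∀ x : B,
            IsLinearMap ℝ (fun v : E x => φ (Bundle.TotalSpace.mk x v)) ∧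
            Function.Injective (fun v : E x => φ (Bundle.TotalSpace.mk x v)) := by
  classical
  obtain hB | hB := isEmpty_or_nonempty B
  · exact ⟨EuclideanSpace ℝ (Fin n), inferInstance, inferInstance, inferInstance, inferInstance,
      fun _ => 0, continuous_const, fun x => isEmptyElim x⟩
  -- a partition of unity subordinate to the trivializing cover
  obtain ⟨f, hf⟩ := PartitionOfUnity.exists_isSubordinate (ι := B) (X := B) isClosed_univ
    (fun i => (trivializationAt (Fin n → ℝ) E i).baseSet)
    (fun i => (trivializationAt (Fin n → ℝ) E i).open_baseSet)
    (fun x _ => mem_iUnion.2 ⟨x, mem_baseSet_trivializationAt (Fin n → ℝ) E x⟩)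
  -- the Milnor sets W S
  set W : Finset B → Set B := fun S =>
    {x | ∀ i ∈ S, 0 < f i x ∧ ∀ j, j ∉ S → f j x < f i x} with hW
  have hWopen : ∀ S : Finset B, IsOpen (W S) := by
    intro S
    rw [isOpen_iff_mem_nhds]
    intro x hx
    simp only [hW, mem_setOf_eq] at hx
    obtain ⟨t, ht, htf⟩ := f.locallyFinite x
    set T : Finset B := htf.toFinset with hT
    have hTmem : ∀ j, j ∈ T ↔ (Function.support (f j) ∩ t).Nonempty := fun j => htf.mem_toFinset
    set O : Set B := interior t ∩ ⋂ i ∈ S, ({y | 0 < f i y} ∩ ⋂ j ∈ T \ S, {y | f j y < f i y})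
      with hO
    have hOopen : IsOpen O := by
      refine isOpen_interior.inter (isOpen_biInter_finset fun i _ => ?_)
      exact (isOpen_lt continuous_const (f i).continuous).inter
        (isOpen_biInter_finset fun j _ => isOpen_lt (f j).continuous (f i).continuous)
    have hxO : x ∈ O := by
      refine ⟨mem_interior_iff_mem_nhds.2 ht, ?_⟩
      refine mem_iInter₂.2 fun i hi => ⟨(hx i hi).1, mem_iInter₂.2 fun j hj => ?_⟩
      exact (hx i hi).2 j (Finset.mem_sdiff.1 hj).2
    have hOW : O ⊆ W S := by
      rintro y ⟨hyt, hy⟩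
      intro i hi
      have h1 := mem_iInter₂.1 hy i hi
      refine ⟨h1.1, fun j hj => ?_⟩
      by_cases hjT : j ∈ T
      · exact mem_iInter₂.1 h1.2 j (Finset.mem_sdiff.2 ⟨hjT, hj⟩)
      · have hz : f j y = 0 := by
          by_contra hne
          exact hjT ((hTmem j).2 ⟨y, hne, interior_subset hyt⟩)
        rw [hz]; exact h1.1
    exact Filter.mem_of_superset (hOopen.mem_nhds hxO) hOW
  have hWdisj : ∀ S S' : Finset B, S.card = S'.card → ∀ x, x ∈ W S → x ∈ W S' → S = S' := by
    intro S S' hc x hS hS'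
    by_contra hne
    have h1 : ∃ i ∈ S, i ∉ S' := by
      by_contra h
      push_neg at h
      exact hne (Finset.eq_of_subset_of_card_le h hc.ge)
    have h2 : ∃ i ∈ S', i ∉ S := by
      by_contra h
      push_neg at h
      exact hne (Finset.eq_of_subset_of_card_le h hc.le).symm
    obtain ⟨i, hiS, hiS'⟩ := h1
    obtain ⟨i', hi'S', hi'S⟩ := h2
    have ha := (hS i hiS).2 i' hi'S
    have hb := (hS' i' hi'S').2 i hiS'
    linarith
  have hWbase : ∀ (S : Finset B) (i : B), i ∈ S →
      W S ⊆ (trivializationAt (Fin n → ℝ) E i).baseSet := by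
    intro S i hi x hx
    exact hf i (subset_closure (hx i hi).1.ne')
  -- the countable cover V
  set V : ℕ → Set B := fun k => ⋃ (S : Finset B) (_ : S.card = k + 1), W S with hV
  have hVopen : ∀ k, IsOpen (V k) := fun k => isOpen_iUnion fun S => isOpen_iUnion fun _ => hWopen S
  have hVmem : ∀ k x, x ∈ V k ↔ ∃ S : Finset B, S.card = k + 1 ∧ x ∈ W S := by
    intro k x
    simp only [hV, mem_iUnion, exists_prop]
  have hVcover : ∀ x : B, ∃ k, x ∈ V k := by
    intro x
    obtain ⟨i, hi⟩ := f.exists_pos (mem_univ x)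
    set S := f.finsupport x with hSdef
    have hSmem : i ∈ S := (f.mem_finsupport x).2 hi.ne'
    have hxW : x ∈ W S := by
      intro i' hi'
      have h1 : 0 < f i' x :=
        lt_of_le_of_ne (f.nonneg i' x) (Ne.symm ((f.mem_finsupport x).1 hi'))
      refine ⟨h1, fun j hj => ?_⟩
      have hz : f j x = 0 := by
        by_contra hne
        exact hj ((f.mem_finsupport x).2 hne)
      rw [hz]; exact h1
    refine ⟨S.card - 1, (hVmem _ _).2 ⟨S, ?_, hxW⟩⟩
    have : 0 < S.card := Finset.card_pos.2 ⟨i, hSmem⟩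
    omega
  -- a countable partition of unity subordinate to V
  obtain ⟨μ, hμ⟩ := PartitionOfUnity.exists_isSubordinate (ι := ℕ) (X := B) isClosed_univ V hVopen
    (fun x _ => mem_iUnion.2 (hVcover x))
  -- a chosen index in each nonempty finset
  set idx : Finset B → B := fun S => if h : S.Nonempty then h.choose else hB.some with hidx
  have hidxmem : ∀ S : Finset B, S.Nonempty → idx S ∈ S := by
    intro S h
    simp only [hidx, dif_pos h]
    exact h.choose_spec
  set e2 : (Fin n → ℝ) ≃L[ℝ] EuclideanSpace ℝ (Fin n) := (EuclideanSpace.equiv (Fin n) ℝ).symm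
    with he2
  -- the k-th coordinate map
  set g : ℕ → Bundle.TotalSpace (Fin n → ℝ) E → EuclideanSpace ℝ (Fin n) := fun k e =>
    if h : ∃ S : Finset B, S.card = k + 1 ∧ e.proj ∈ W S
    then μ k e.proj • e2 ((trivializationAt (Fin n → ℝ) E (idx h.choose)) e).2
    else 0 with hg
  have hg_eq : ∀ (k : ℕ) (S : Finset B), S.card = k + 1 →
      ∀ e : Bundle.TotalSpace (Fin n → ℝ) E, e.proj ∈ W S →
      g k e = μ k e.proj • e2 ((trivializationAt (Fin n → ℝ) E (idx S)) e).2 := by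
    intro k S hS e he
    rw [hg]
    dsimp only
    split
    · next h' =>
      have hch : h'.choose = S :=
        hWdisj _ _ (h'.choose_spec.1.trans hS.symm) e.proj h'.choose_spec.2 he
      rw [hch]
    · next h' => exact absurd ⟨S, hS, he⟩ h'
  have hg_zero : ∀ k e, μ k e.proj = 0 → g k e = 0 := by
    intro k e h
    rw [hg]
    dsimp only
    split
    · rw [h, zero_smul]
    · rfl
  have hg_lin : ∀ (k : ℕ) (x : B), IsLinearMap ℝ fun v : E x => g k (Bundle.TotalSpace.mk x v) := by
    intro k x
    by_cases h : ∃ S : Finset B, S.card = k + 1 ∧ x ∈ W S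
    · obtain ⟨S, hS, hxS⟩ := h
      have hne : S.Nonempty := Finset.card_pos.1 (by omega)
      have hmemb : x ∈ (trivializationAt (Fin n → ℝ) E (idx S)).baseSet :=
        hWbase S (idx S) (hidxmem S hne) hxS
      have key : ∀ v : E x, g k (Bundle.TotalSpace.mk x v) =
          μ k x • e2 (((trivializationAt (Fin n → ℝ) E (idx S)).continuousLinearEquivAt
            ℝ x hmemb) v) := by
        intro v
        rw [hg_eq k S hS _ hxS]
        rfl
      constructor
      · intro v w
        simp only [key, map_add, smul_add]
      · intro c v
        simp only [key, map_smul]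
        rw [smul_comm]
    · have key : ∀ v : E x, g k (Bundle.TotalSpace.mk x v) = 0 := by
        intro v
        rw [hg]
        dsimp only
        split
        · next h' => exact absurd h' h
        · rfl
      exact ⟨fun v w => by simp [key], fun c v => by simp [key]⟩
  have hμV : ∀ k, tsupport (μ k) ⊆ V k := hμ
  have hgcont : ∀ k, Continuous (g k) := by
    intro k
    rw [continuous_iff_continuousAt]
    intro e
    by_cases hx : e.proj ∈ V k
    · obtain ⟨S, hS, hxS⟩ := (hVmem k e.proj).1 hx
      have hne : S.Nonempty := Finset.card_pos.1 (by omega)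
      have hWb : W S ⊆ (trivializationAt (Fin n → ℝ) E (idx S)).baseSet :=
        hWbase S _ (hidxmem S hne)
      have hO : IsOpen (Bundle.TotalSpace.proj ⁻¹' W S : Set (Bundle.TotalSpace (Fin n → ℝ) E)) :=
        (hWopen S).preimage (FiberBundle.continuous_proj (Fin n → ℝ) E)
      have hcont : ContinuousOn
          (fun e' : Bundle.TotalSpace (Fin n → ℝ) E =>
            μ k e'.proj • e2 ((trivializationAt (Fin n → ℝ) E (idx S)) e').2)
          (Bundle.TotalSpace.proj ⁻¹' W S) := by
        apply ContinuousOn.fun_smul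
        · exact ((μ k).continuous.comp (FiberBundle.continuous_proj (Fin n → ℝ) E)).continuousOn
        · refine e2.continuous.comp_continuousOn ?_
          refine continuous_snd.comp_continuousOn
            (((trivializationAt (Fin n → ℝ) E (idx S)).continuousOn).mono ?_)
          rw [(trivializationAt (Fin n → ℝ) E (idx S)).source_eq]
          exact fun e' he' => hWb he'
      have hcg : ContinuousOn (g k) (Bundle.TotalSpace.proj ⁻¹' W S) :=
        hcont.congr fun e' he' => hg_eq k S hS e' he'
      exact hcg.continuousAt (hO.mem_nhds hxS)
    · have h1 : e.proj ∉ tsupport (μ k) := fun h => hx (hμV k h)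
      have h2 : (Bundle.TotalSpace.proj ⁻¹' (tsupport (μ k))ᶜ :
          Set (Bundle.TotalSpace (Fin n → ℝ) E)) ∈ 𝓝 e :=
        ((isClosed_tsupport _).isOpen_compl.preimage
          (FiberBundle.continuous_proj (Fin n → ℝ) E)).mem_nhds h1
      have h3 : g k =ᶠ[𝓝 e] fun _ => 0 :=
        Filter.eventually_of_mem h2 fun e' he' =>
          hg_zero k e' (image_eq_zero_of_notMem_tsupport he')
      exact ContinuousAt.congr continuousAt_const h3.symm
  have hmem : ∀ e : Bundle.TotalSpace (Fin n → ℝ) E, Memℓp (fun k => g k e) 2 := by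
    intro e
    refine (memℓp_zero ?_).of_exponent_ge zero_le
    apply (μ.locallyFinite.point_finite e.proj).subset
    intro k hk
    exact fun h0 => hk (hg_zero k e h0)
  set φ : Bundle.TotalSpace (Fin n → ℝ) E → lp (fun _ : ℕ => EuclideanSpace ℝ (Fin n)) 2 :=
    fun e => ⟨fun k => g k e, show Memℓp _ _ from hmem e⟩ with hφ
  have hφapp : ∀ e k, (φ e : ∀ _ : ℕ, EuclideanSpace ℝ (Fin n)) k = g k e := fun e k => rfl
  have hφcont : Continuous φ := by
    rw [continuous_iff_continuousAt]
    intro e0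
    obtain ⟨t, htn, htf⟩ := μ.locallyFinite e0.proj
    set K : Finset ℕ := htf.toFinset with hK
    have hN : (Bundle.TotalSpace.proj ⁻¹' t : Set (Bundle.TotalSpace (Fin n → ℝ) E)) ∈ 𝓝 e0 :=
      (FiberBundle.continuous_proj (Fin n → ℝ) E).continuousAt.preimage_mem_nhds htn
    have heq : ∀ e' ∈ (Bundle.TotalSpace.proj ⁻¹' t :
        Set (Bundle.TotalSpace (Fin n → ℝ) E)),
        φ e' = ∑ k ∈ K, lp.single 2 k (g k e') := by
      intro e' he'
      apply lp.ext
      funext j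
      simp only [lp.coeFn_sum, Finset.sum_apply, lp.single_apply, Pi.single_apply, Finset.sum_ite_eq, Finset.sum_dite_eq, hφapp]
      by_cases hj : j ∈ K
      · rw [if_pos hj]
      · have hz : μ j e'.proj = 0 := by
          by_contra h0
          exact hj (htf.mem_toFinset.2 ⟨e'.proj, h0, he'⟩)
        rw [if_neg hj, hg_zero j e' hz]
    have hc : ContinuousAt (fun e' => ∑ k ∈ K, lp.single 2 k (g k e')) e0 :=
      (continuous_finset_sum K fun k _ =>
        ((lp_isometry_single k).continuous.comp (hgcont k))).continuousAt
    exact hc.congr (Filter.eventuallyEq_of_mem hN fun e' he' => (heq e' he').symm)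
  refine ⟨lp (fun _ : ℕ => EuclideanSpace ℝ (Fin n)) 2, inferInstance, inferInstance, inferInstance,
    lp_two_separable, φ, hφcont, ?_⟩
  intro x
  refine ⟨⟨?_, ?_⟩, ?_⟩
  · intro v w
    apply lp.ext
    funext k
    simp only [lp.coeFn_add, Pi.add_apply, hφapp]
    exact (hg_lin k x).map_add v w
  · intro c v
    apply lp.ext
    funext k
    simp only [lp.coeFn_smul, Pi.smul_apply, hφapp]
    exact (hg_lin k x).map_smul c v
  · obtain ⟨k, hk⟩ := μ.exists_pos (mem_univ x)
    have hxV : x ∈ V k := hμV k (subset_closure hk.ne')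
    obtain ⟨S, hS, hxS⟩ := (hVmem k x).1 hxV
    have hne : S.Nonempty := Finset.card_pos.1 (by omega)
    have hmemb : x ∈ (trivializationAt (Fin n → ℝ) E (idx S)).baseSet :=
      hWbase S _ (hidxmem S hne) hxS
    intro v w hvw
    have h1 : g k (Bundle.TotalSpace.mk x v) = g k (Bundle.TotalSpace.mk x w) := by
      have := congrFun (congrArg (fun u : lp (fun _ : ℕ => EuclideanSpace ℝ (Fin n)) 2 =>
        (u : ∀ _ : ℕ, EuclideanSpace ℝ (Fin n))) hvw) k
      simpa only [hφapp] using this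
    rw [hg_eq k S hS _ hxS, hg_eq k S hS _ hxS] at h1
    have h2 := smul_right_injective (EuclideanSpace ℝ (Fin n)) hk.ne' h1
    have h3 := e2.injective h2
    exact ((trivializationAt (Fin n → ℝ) E (idx S)).continuousLinearEquivAt ℝ x hmemb).injective h3
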